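/- arXiv:1002.3507 — 3 statements merged into one kernel-verified Lean document; each statement's English description precedes it below -/
import Mathlib

section
/- Let G be a locally compact, second countable, Hausdorff topological group, U a continuous unitary representation of G on a finite-dimensional complex Hilbert space H, and μ a Borel probability measure on G. Then the twirling superoperator S_μ is a random unitary map: there exist finitely many unitary operators V_1, …, V_m on H and a probability distribution p_1, …, p_m (p_k ≥ 0, Σ p_k = 1) such that S_μ(A) = Σ_{k=1}^m p_k V_k A V_k* for all A ∈ End(H); moreover, the unitaries V_k can be chosen in the closure of U(G) in the unitary group of H. -/
open MeasureTheory

set_option maxHeartbeats 1000000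
set_option synthInstance.maxHeartbeats 400000
set_option maxSynthPendingDepth 2

/-- Convex hull of a compact set in a finite-dimensional normed real vector space is compact. -/
lemma my_isCompact_convexHull {E : Type*} [NormedAddCommGroup E] [NormedSpace ℝ E]
    [FiniteDimensional ℝ E] {s : Set E} (hs : IsCompact s) :
    IsCompact (convexHull ℝ s) := by
  classical
  rcases s.eq_empty_or_nonempty with rfl | hne
  · simpa using isCompact_empty
  set n := Module.finrank ℝ E + 1 with hn
  set C : Set ((Fin n → ℝ) × (Fin n → E)) :=
    (stdSimplex ℝ (Fin n)) ×ˢ (Set.univ.pi fun _ => s) with hC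
  have hCcompact : IsCompact C := (isCompact_stdSimplex (𝕜 := ℝ) (ι := Fin n)).prod (isCompact_univ_pi fun _ => hs)
  set f : ((Fin n → ℝ) × (Fin n → E)) → E := fun p => ∑ i, p.1 i • p.2 i with hf
  have hfc : Continuous f := by
    apply continuous_finset_sum
    intro i _
    exact ((continuous_apply i).comp continuous_fst).smul
      ((continuous_apply i).comp continuous_snd)
  have key : convexHull ℝ s = f '' C := by
    apply Set.Subset.antisymm
    · intro y hy
      -- Carathéodory
      rw [convexHull_eq_union] at hy
      simp only [Set.mem_iUnion] at hy
      obtain ⟨t, hts, hai, hyt⟩ := hy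
      have htcard : t.card ≤ n := by
        have h1 := hai.card_le_finrank_succ
        have h2 : Module.finrank ℝ (vectorSpan ℝ (Set.range ((↑) : t → E))) ≤
            Module.finrank ℝ E := Submodule.finrank_le _
        rw [Fintype.card_coe] at h1
        exact h1.trans (Nat.add_le_add_right h2 1)
      have htne : t.Nonempty := by
        rcases t.eq_empty_or_nonempty with rfl | h
        · simp at hyt
        · exact h
      obtain ⟨y0, hy0⟩ := htne
      rw [Finset.convexHull_eq] at hyt
      obtain ⟨w, hw0, hw1, hwy⟩ := hyt
      rw [t.centerMass_eq_of_sum_1 _ hw1] at hwy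
      set m := t.card with hm
      set z : Fin m → E := fun j => (t.equivFin.symm j : E) with hz
      have hzmem : ∀ j, z j ∈ t := fun j => (t.equivFin.symm j).2
      set x : Fin n → E := fun i => if h : (i : ℕ) < m then z ⟨i, h⟩ else y0 with hx
      set w' : Fin n → ℝ := fun i => if h : (i : ℕ) < m then w (z ⟨i, h⟩) else 0 with hw'
      have hxmem : ∀ i, x i ∈ s := by
        intro i
        show (if h : (i : ℕ) < m then z ⟨i, h⟩ else y0) ∈ s
        split
        · exact hts (hzmem _)
        · exact hts hy0
      have hw'0 : ∀ i, 0 ≤ w' i := by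
        intro i
        show (0:ℝ) ≤ if h : (i : ℕ) < m then w (z ⟨i, h⟩) else 0
        split
        · exact hw0 _ (hzmem _)
        · exact le_refl 0
      -- sums over Fin n reduce to sums over the embedded Fin m
      have main : ∀ (φ : ℝ → E → E),
          (∑ i : Fin n, (if h : (i : ℕ) < m then φ (w (z ⟨i, h⟩)) (z ⟨i, h⟩) else 0)) =
            ∑ a ∈ t, φ (w a) a := by
        intro φ
        have hemb : ∀ i : Fin n, (i : ℕ) < m → i ∈ Finset.univ.map (Fin.castLEEmb htcard) := by
          intro i hi
          simp only [Finset.mem_map, Finset.mem_univ, true_and]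
          exact ⟨⟨i, hi⟩, rfl⟩
        rw [← Finset.sum_subset (Finset.subset_univ (Finset.univ.map (Fin.castLEEmb htcard)))
          (by
            intro i _ hi
            rw [dif_neg]
            intro h
            exact hi (hemb i h))]
        rw [Finset.sum_map]
        have : ∀ j : Fin m, (dite (((Fin.castLEEmb htcard) j : ℕ) < m)
            (fun h => φ (w (z ⟨((Fin.castLEEmb htcard) j : ℕ), h⟩))
              (z ⟨((Fin.castLEEmb htcard) j : ℕ), h⟩)) (fun _ => 0)) = φ (w (z j)) (z j) := by
          intro j
          rw [dif_pos (by simpa using j.2)]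
          rfl

        rw [Finset.sum_congr rfl fun j _ => this j]
        -- now sum over Fin m ≃ t
        rw [← t.sum_attach (fun a => φ (w a) a)]
        exact Equiv.sum_comp t.equivFin.symm (fun a : t => φ (w (a : E)) (a : E))
      refine ⟨(w', x), ⟨⟨hw'0, ?_⟩, fun i _ => hxmem i⟩, ?_⟩
      · -- weights sum to 1
        calc ∑ i, w' i = ∑ a ∈ t, w a := by
              rw [hw']
              have hemb : ∀ i : Fin n, (i : ℕ) < m →
                  i ∈ Finset.univ.map (Fin.castLEEmb htcard) := by
                intro i hi
                simp only [Finset.mem_map, Finset.mem_univ, true_and]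
                exact ⟨⟨i, hi⟩, rfl⟩
              rw [← Finset.sum_subset
                (Finset.subset_univ (Finset.univ.map (Fin.castLEEmb htcard)))
                (by
                  intro i _ hi
                  rw [dif_neg]
                  intro h
                  exact hi (hemb i h))]
              rw [Finset.sum_map]
              rw [Finset.sum_congr rfl (fun j _ => dif_pos (show ((Fin.castLEEmb htcard) j : ℕ) < m by simpa using j.2))]
              rw [← t.sum_attach (fun a => w a)]
              exact Equiv.sum_comp t.equivFin.symm (fun a : t => w (a : E))
          _ = 1 := hw1
      · -- the center of mass
        rw [hf]
        have : (∑ i : Fin n, w' i • x i) = ∑ a ∈ t, w a • a := by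
          have heq : ∀ i : Fin n, w' i • x i =
              if h : (i : ℕ) < m then w (z ⟨i, h⟩) • z ⟨i, h⟩ else 0 := by
            intro i
            show (if h : (i : ℕ) < m then w (z ⟨i, h⟩) else 0) •
              (if h : (i : ℕ) < m then z ⟨i, h⟩ else y0) = _
            by_cases h : (i : ℕ) < m
            · rw [dif_pos h, dif_pos h, dif_pos h]
            · rw [dif_neg h, dif_neg h, dif_neg h, zero_smul]
          rw [Finset.sum_congr rfl fun i _ => heq i]
          exact main (fun r a => r • a)
        simpa using this.trans hwy
    · rintro _ ⟨⟨w, x⟩, ⟨⟨hw0, hw1⟩, hx⟩, rfl⟩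
      exact mem_convexHull_of_exists_fintype w x hw0 hw1
        (fun i => hx i (Set.mem_univ i)) rfl
  rw [key]
  exact hCcompact.image hfc


/-- Every twirling superoperator `S_μ` on a finite-dimensional space is a
random unitary map, with the unitaries in the closure of `U(G)`. -/
theorem twirling_is_random_unitary
    {G : Type*} [Group G] [TopologicalSpace G] [IsTopologicalGroup G]
    [LocallyCompactSpace G] [SecondCountableTopology G] [T2Space G]
    [MeasurableSpace G] [BorelSpace G]
    {H : Type*} [NormedAddCommGroup H] [InnerProductSpace ℂ H]
    [FiniteDimensional ℂ H]
    (U : G → H →L[ℂ] H)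
    (hU_one : U 1 = 1)
    (hU_mul : ∀ g h : G, U (g * h) = U g * U h)
    (hU_unitary : ∀ g, U g ∈ unitary (H →L[ℂ] H))
    (hU_cont : Continuous U)
    (μ : Measure G) [IsProbabilityMeasure μ] :
    ∃ (m : ℕ) (V : Fin m → (H →L[ℂ] H)) (p : Fin m → ℝ),
      (∀ k, V k ∈ unitary (H →L[ℂ] H)) ∧
      (∀ k, V k ∈ closure (Set.range U)) ∧
      (∀ k, 0 ≤ p k) ∧ (∑ k, p k = 1) ∧
      ∀ A : H →L[ℂ] H,
        (∫ g, U g * A * star (U g) ∂μ) = ∑ k, p k • (V k * A * star (V k)) := by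
  classical
  let T : (H →L[ℂ] H) → ((H →L[ℂ] H) →L[ℂ] (H →L[ℂ] H)) :=
    fun v => ContinuousLinearMap.mulLeftRight ℂ (H →L[ℂ] H) v (star v)
  have hTapp : ∀ (v A : H →L[ℂ] H), T v A = v * A * star v := fun v A => rfl
  have hTcont : Continuous T := by
    have c1 : Continuous fun v : H →L[ℂ] H => ContinuousLinearMap.mulLeftRight ℂ (H →L[ℂ] H) v :=
      (ContinuousLinearMap.mulLeftRight ℂ (H →L[ℂ] H)).continuous
    exact c1.clm_apply continuous_star
  have hnorm : ∀ v ∈ Set.range U, ‖v‖ ≤ 1 := by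
    rintro _ ⟨g, rfl⟩
    rcases subsingleton_or_nontrivial (H →L[ℂ] H) with h | h
    · simp [Subsingleton.elim (U g) 0]
    · exact le_of_eq (CStarRing.norm_of_mem_unitary (hU_unitary g))
  have hKunitary : closure (Set.range U) ⊆ unitary (H →L[ℂ] H) := by
    have hclosed : IsClosed (unitary (H →L[ℂ] H) : Set (H →L[ℂ] H)) := by
      have h1 : IsClosed {x : H →L[ℂ] H | star x * x = 1} :=
        isClosed_eq (continuous_star.mul continuous_id) continuous_const
      have h2 : IsClosed {x : H →L[ℂ] H | x * star x = 1} :=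
        isClosed_eq (continuous_id.mul continuous_star) continuous_const
      have : (unitary (H →L[ℂ] H) : Set (H →L[ℂ] H)) =
          {x : H →L[ℂ] H | star x * x = 1} ∩ {x : H →L[ℂ] H | x * star x = 1} := by
        ext x; exact Iff.rfl
      rw [this]; exact h1.inter h2
    exact closure_minimal (fun v hv => by rcases hv with ⟨g, rfl⟩; exact hU_unitary g) hclosed
  have hKcompact : IsCompact (closure (Set.range U)) := by
    apply Metric.isCompact_of_isClosed_isBounded isClosed_closure
    exact ((Metric.isBounded_iff_subset_closedBall 0).2
      ⟨1, fun v hv => by simpa using hnorm v hv⟩).closure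
  have hSconv : Convex ℝ (convexHull ℝ (T '' closure (Set.range U))) := convex_convexHull _ _
  have hScompact : IsCompact (convexHull ℝ (T '' closure (Set.range U))) :=
    my_isCompact_convexHull (hKcompact.image hTcont)
  have hint : Integrable (fun g => T (U g)) μ := by
    have hc : Continuous fun g => T (U g) := hTcont.comp hU_cont
    refine ⟨hc.aestronglyMeasurable, ?_⟩
    apply HasFiniteIntegral.of_bounded (C := 1)
    filter_upwards with g
    calc ‖T (U g)‖ ≤ ‖U g‖ * ‖star (U g)‖ :=
          ContinuousLinearMap.opNorm_mulLeftRight_apply_apply_le ℂ (H →L[ℂ] H) _ _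
      _ ≤ 1 * 1 := by
          rw [norm_star]
          exact mul_le_mul (hnorm _ ⟨g, rfl⟩) (hnorm _ ⟨g, rfl⟩) (norm_nonneg _) zero_le_one
      _ = 1 := by ring
  have hmem : (∫ g, T (U g) ∂μ) ∈ convexHull ℝ (T '' closure (Set.range U)) := by
    refine hSconv.integral_mem hScompact.isClosed ?_ hint
    filter_upwards with g
    exact subset_convexHull _ _ ⟨U g, subset_closure ⟨g, rfl⟩, rfl⟩
  rw [mem_convexHull_iff_exists_fintype] at hmem
  obtain ⟨ι, hι, w, z, hw0, hw1, hz, hsum⟩ := hmem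
  choose V' hV'K hV'z using hz
  let e := (Fintype.equivFin ι).symm
  refine ⟨Fintype.card ι, fun k => V' (e k), fun k => w (e k), fun k => hKunitary (hV'K (e k)),
    fun k => hV'K (e k), fun k => hw0 (e k), ?_, ?_⟩
  · rw [e.sum_comp]; exact hw1
  · intro A
    have h1 : (∫ g, U g * A * star (U g) ∂μ) = (∫ g, T (U g) ∂μ) A := by
      rw [ContinuousLinearMap.integral_apply hint]
      rfl
    rw [h1, ← hsum]
    have h2 : ∀ i, z i = T (V' i) := fun i => (hV'z i).symm
    rw [← e.sum_comp (fun i => w i • z i)]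
    simp only [ContinuousLinearMap.coe_sum', Finset.sum_apply, h2,
      ContinuousLinearMap.coe_smul', Pi.smul_apply, hTapp]
end

section
/- Let H be a complex Hilbert space of finite dimension N. Then every random unitary map on End(H) can be written as a convex combination of at most N⁴ − 2N² + 2 unitary conjugations; that is, for every 𝔘 in the convex hull of {A ↦ V A V* : V unitary on H} there exist m ≤ (N²−1)² + 1 unitary operators V_1, …, V_m and nonnegative reals p_1, …, p_m with Σ p_k = 1 such that 𝔘(A) = Σ_{k=1}^m p_k V_k A V_k* for all A ∈ End(H). -/
open MeasureTheory

/-- Conjugation `A ↦ V A V*` by an operator `V`, as a continuous linear map on `End(H)`. -/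
noncomputable def conjCLM {H : Type*} [NormedAddCommGroup H] [InnerProductSpace ℂ H]
    [FiniteDimensional ℂ H] (V : H →L[ℂ] H) :
    (H →L[ℂ] H) →L[ℂ] (H →L[ℂ] H) :=
  ContinuousLinearMap.mulLeftRight ℂ (H →L[ℂ] H) V (star V)

section Aux

open Module Complex ComplexStarModule

set_option synthInstance.maxHeartbeats 1000000
set_option maxHeartbeats 1000000
set_option linter.unusedSectionVars false

variable {H : Type*} [NormedAddCommGroup H] [InnerProductSpace ℂ H] [FiniteDimensional ℂ H]

/-- The trace, as a `ℂ`-linear functional on `End(H)`. -/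
noncomputable def trB : (H →L[ℂ] H) →ₗ[ℂ] ℂ :=
  (LinearMap.trace ℂ H).comp (ContinuousLinearMap.coeLM ℂ)

lemma trB_mul_comm (f g : H →L[ℂ] H) : trB (f * g) = trB (g * f) := by
  simp only [trB, LinearMap.comp_apply, ContinuousLinearMap.coeLM, LinearMap.coe_mk,
    AddHom.coe_mk]
  have h1 : ((f * g : H →L[ℂ] H) : H →ₗ[ℂ] H) = (f : H →ₗ[ℂ] H) * (g : H →ₗ[ℂ] H) := rfl
  have h2 : ((g * f : H →L[ℂ] H) : H →ₗ[ℂ] H) = (g : H →ₗ[ℂ] H) * (f : H →ₗ[ℂ] H) := rfl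
  rw [h1, h2, LinearMap.trace_mul_comm]

lemma trB_one : trB (1 : H →L[ℂ] H) = (Module.finrank ℂ H : ℂ) := by
  have : ((1 : H →L[ℂ] H) : H →ₗ[ℂ] H) = LinearMap.id := rfl
  simp only [trB, LinearMap.comp_apply, ContinuousLinearMap.coeLM, LinearMap.coe_mk,
    AddHom.coe_mk, this, LinearMap.trace_id]

lemma trB_conj {V : H →L[ℂ] H} (hV : V ∈ unitary (H →L[ℂ] H)) (A : H →L[ℂ] H) :
    trB (V * A * star V) = trB A := by
  rw [trB_mul_comm, ← mul_assoc, (Unitary.mem_iff.mp hV).1, one_mul]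

/-- Real part of the trace, as an `ℝ`-linear functional. -/
noncomputable def reTrB : (H →L[ℂ] H) →ₗ[ℝ] ℝ :=
  Complex.reLm.comp ((trB (H := H)).restrictScalars ℝ)

/-- The real subspace of `End(End H)` of adjoint-compatible, unit-annihilating,
trace-annihilating maps. Differences of unitary conjugations live here. -/
noncomputable def goodSub :
    Submodule ℝ ((H →L[ℂ] H) →L[ℂ] (H →L[ℂ] H)) where
  carrier := {Φ | (∀ A, Φ (star A) = star (Φ A)) ∧ Φ 1 = 0 ∧ ∀ A, trB (Φ A) = 0}
  add_mem' := by
    rintro Φ Ψ ⟨h1, h2, h3⟩ ⟨g1, g2, g3⟩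
    refine ⟨fun A => ?_, ?_, fun A => ?_⟩ <;>
      simp [h1, h2, h3 _, g1, g2, g3 _, star_add]
  zero_mem' := by
    refine ⟨fun A => ?_, ?_, fun A => ?_⟩ <;> simp
  smul_mem' := by
    rintro c Φ ⟨h1, h2, h3⟩
    refine ⟨fun A => ?_, ?_, fun A => ?_⟩ <;>
      simp [h1, h2, h3 _, star_smul, LinearMap.map_smul_of_tower]

lemma conj_diff_mem_goodSub {V W : H →L[ℂ] H}
    (hV : V ∈ unitary (H →L[ℂ] H)) (hW : W ∈ unitary (H →L[ℂ] H)) :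
    conjCLM V - conjCLM W ∈ goodSub := by
  have hconj : ∀ (U A : H →L[ℂ] H), star (U * A * star U) = U * star A * star U := by
    intro U A
    simp [star_mul, mul_assoc]
  refine ⟨fun A => ?_, ?_, fun A => ?_⟩
  · simp only [ContinuousLinearMap.sub_apply, conjCLM,
      ContinuousLinearMap.mulLeftRight_apply, star_sub, hconj]
  · simp only [ContinuousLinearMap.sub_apply, conjCLM,
      ContinuousLinearMap.mulLeftRight_apply, mul_one,
      (Unitary.mem_iff.mp hV).2, (Unitary.mem_iff.mp hW).2, sub_self]
  · simp only [ContinuousLinearMap.sub_apply, conjCLM,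
      ContinuousLinearMap.mulLeftRight_apply, map_sub,
      trB_conj hV, trB_conj hW, sub_self]

/-- The selfadjoint part of `End(H)` as a real submodule. -/
noncomputable def saSub : Submodule ℝ (H →L[ℂ] H) := selfAdjoint.submodule ℝ (H →L[ℂ] H)

noncomputable instance instACGsa : AddCommGroup ↥(saSub (H := H)) := Submodule.addCommGroup _
noncomputable instance instModSa : Module ℝ ↥(saSub (H := H)) := Submodule.module _
instance instFinSa : Module.Finite ℝ ↥(saSub (H := H)) :=
  FiniteDimensional.finiteDimensional_submodule _

/-- Traceless selfadjoint operators. -/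
noncomputable def T0 : Submodule ℝ (saSub (H := H)) :=
  LinearMap.ker ((reTrB (H := H)).comp (saSub (H := H)).subtype)

noncomputable instance instACGT0 : AddCommGroup ↥(T0 (H := H)) := Submodule.addCommGroup _
noncomputable instance instModT0 : Module ℝ ↥(T0 (H := H)) := Submodule.module _
instance instFinT0 : Module.Finite ℝ ↥(T0 (H := H)) :=
  FiniteDimensional.finiteDimensional_submodule _

noncomputable instance instSelfAdjFin : Module.Finite ℝ ↥(selfAdjoint (H →L[ℂ] H)) :=
  inferInstanceAs (Module.Finite ℝ ↥(selfAdjoint.submodule ℝ (H →L[ℂ] H)))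
noncomputable instance instSkewAdjFin : Module.Finite ℝ ↥(skewAdjoint (H →L[ℂ] H)) :=
  inferInstanceAs (Module.Finite ℝ ↥(skewAdjoint.submodule ℝ (H →L[ℂ] H)))

/-- Multiplication by `-I` identifies skewadjoint with selfadjoint operators `ℝ`-linearly. -/
noncomputable def skewEquivSa : skewAdjoint (H →L[ℂ] H) ≃ₗ[ℝ] selfAdjoint (H →L[ℂ] H) where
  toFun := skewAdjoint.negISMul
  map_add' := map_add _
  map_smul' := _root_.map_smul _
  invFun a := ⟨I • (a : H →L[ℂ] H), by
    have ha := a.2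
    rw [skewAdjoint.mem_iff, star_smul, ha.star_eq]
    simp⟩
  left_inv a := Subtype.ext (skewAdjoint.I_smul_neg_I a)
  right_inv a := Subtype.ext <| by
    simp only [skewAdjoint.negISMul_apply_coe, smul_smul, neg_mul, I_mul_I, neg_neg, one_smul]

theorem finrank_saSub : finrank ℝ ↥(saSub (H := H)) = (finrank ℂ H) ^ 2 := by
  have h1 : finrank ℝ (H →L[ℂ] H) = 2 * ((finrank ℂ H) * (finrank ℂ H)) := by
    rw [finrank_real_of_complex]
    congr 1
    rw [← LinearEquiv.finrank_eq
      (LinearMap.toContinuousLinearMap : (H →ₗ[ℂ] H) ≃ₗ[ℂ] (H →L[ℂ] H))]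
    exact Module.finrank_linearMap ..
  have h2 := LinearEquiv.finrank_eq (StarModule.decomposeProdAdjoint ℝ (H →L[ℂ] H))
  rw [Module.finrank_prod, LinearEquiv.finrank_eq (skewEquivSa (H := H)), h1] at h2
  have h3 : (finrank ℂ H) ^ 2 = (finrank ℂ H) * (finrank ℂ H) := sq (finrank ℂ H) ▸ rfl
  have h4 : finrank ℝ ↥(saSub (H := H)) = finrank ℝ (selfAdjoint (H →L[ℂ] H)) := rfl
  omega

theorem finrank_T0 (hN : 1 ≤ finrank ℂ H) :
    finrank ℝ ↥(T0 (H := H)) = (finrank ℂ H) ^ 2 - 1 := by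
  set f := (reTrB (H := H)).comp (saSub (H := H)).subtype with hf
  have h1mem : (1 : H →L[ℂ] H) ∈ saSub := by
    show IsSelfAdjoint (1 : H →L[ℂ] H)
    exact IsSelfAdjoint.one _
  have hNne : ((finrank ℂ H : ℝ)) ≠ 0 := by positivity
  have hval : ∀ c : ℝ, f (c • ⟨1, h1mem⟩) = c * (finrank ℂ H : ℝ) := by
    intro c
    have : f ⟨1, h1mem⟩ = (finrank ℂ H : ℝ) := by
      show (trB (1 : H →L[ℂ] H)).re = _
      rw [trB_one]; simp
    rw [_root_.map_smul, this, smul_eq_mul]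
  have hsurj : Function.Surjective f := by
    intro r
    refine ⟨(r / (finrank ℂ H : ℝ)) • ⟨1, h1mem⟩, ?_⟩
    rw [hval]
    field_simp
  have hrange : LinearMap.range f = ⊤ := LinearMap.range_eq_top.mpr hsurj
  have h2 := LinearMap.finrank_range_add_finrank_ker f
  rw [hrange, finrank_top, finrank_self] at h2
  have h3 : finrank ℝ ↥(T0 (H := H)) = finrank ℝ (LinearMap.ker f) := rfl
  rw [h3]
  rw [finrank_saSub] at h2
  omega

/-- Restriction of a "good" map to the traceless selfadjoint part. -/
noncomputable def Psi : goodSub (H := H) →ₗ[ℝ] (↥(T0 (H := H)) →ₗ[ℝ] ↥(T0 (H := H))) where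
  toFun Φ :=
    { toFun := fun x => ⟨⟨Φ.1 x.1.1, by
        have hx : IsSelfAdjoint (x.1.1 : H →L[ℂ] H) := x.1.2
        show star (Φ.1 x.1.1) = Φ.1 x.1.1
        rw [← Φ.2.1, hx.star_eq]⟩, by
        show (trB (Φ.1 x.1.1)).re = 0
        rw [Φ.2.2.2]; simp⟩
      map_add' := by
        intro x y
        apply Subtype.ext; apply Subtype.ext
        simp
      map_smul' := by
        intro c x
        apply Subtype.ext; apply Subtype.ext
        simp [ContinuousLinearMap.map_smul_of_tower] }
  map_add' := by
    intro Φ Ψ'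
    apply LinearMap.ext; intro x
    apply Subtype.ext; apply Subtype.ext
    simp
  map_smul' := by
    intro c Φ
    apply LinearMap.ext; intro x
    apply Subtype.ext; apply Subtype.ext
    simp

lemma Psi_injective (hN : 1 ≤ finrank ℂ H) : Function.Injective (Psi (H := H)) := by
  have hNne : ((finrank ℂ H : ℝ)) ≠ 0 := by positivity
  rw [injective_iff_map_eq_zero]
  intro Φ hΦ
  have key0 : ∀ A : H →L[ℂ] H, ∀ hA : A ∈ saSub (H := H), reTrB A = 0 → Φ.1 A = 0 := by
    intro A hA htr
    have hmem : (⟨A, hA⟩ : ↥(saSub (H := H))) ∈ T0 (H := H) := by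
      simpa [T0, LinearMap.mem_ker] using htr
    have := congrArg
      (fun g => ((g ⟨⟨A, hA⟩, hmem⟩ : ↥(T0 (H := H))) : ↥(saSub (H := H))).1) hΦ
    simpa [Psi] using this
  have key1 : ∀ A : H →L[ℂ] H, A ∈ saSub (H := H) → Φ.1 A = 0 := by
    intro A hA
    have h1mem : (1 : H →L[ℂ] H) ∈ saSub (H := H) := IsSelfAdjoint.one _
    set c : ℝ := reTrB A / (finrank ℂ H : ℝ) with hc
    have hA' : A - c • 1 ∈ saSub (H := H) := sub_mem hA (Submodule.smul_mem _ _ h1mem)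
    have htr1 : reTrB (1 : H →L[ℂ] H) = (finrank ℂ H : ℝ) := by
      show (trB (1 : H →L[ℂ] H)).re = _
      rw [trB_one]; simp
    have htr' : reTrB (A - c • (1 : H →L[ℂ] H)) = 0 := by
      rw [map_sub, _root_.map_smul, htr1, smul_eq_mul, hc]
      field_simp; simp
    have h0 := key0 _ hA' htr'
    have : Φ.1 A - c • Φ.1 (1 : H →L[ℂ] H) = 0 := by
      rw [← Φ.1.map_smul_of_tower, ← map_sub]; exact h0
    rw [Φ.2.2.1] at this
    simpa using this
  apply Subtype.ext
  apply ContinuousLinearMap.ext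
  intro A
  have hre : IsSelfAdjoint ((ℜ A : H →L[ℂ] H)) := (ℜ A).2
  have him : IsSelfAdjoint ((ℑ A : H →L[ℂ] H)) := (ℑ A).2
  calc Φ.1 A = Φ.1 ((ℜ A : H →L[ℂ] H) + I • (ℑ A : H →L[ℂ] H)) := by
        rw [realPart_add_I_smul_imaginaryPart]
    _ = Φ.1 (ℜ A : H →L[ℂ] H) + I • Φ.1 (ℑ A : H →L[ℂ] H) := by
        rw [map_add, _root_.map_smul]
    _ = 0 := by
        rw [key1 _ hre, key1 _ him]; simp

theorem finrank_goodSub_le (hN : 1 ≤ finrank ℂ H) :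
    finrank ℝ ↥(goodSub (H := H)) ≤ ((finrank ℂ H) ^ 2 - 1) ^ 2 := by
  have h := LinearMap.finrank_le_finrank_of_injective (Psi_injective (H := H) hN)
  rw [Module.finrank_linearMap, finrank_T0 hN] at h
  simpa [sq] using h

end Aux

/-- Every random unitary map on `End(H)`, `dim H = N`, is a convex
combination of at most `N⁴ − 2N² + 2 = (N²−1)² + 1` unitary conjugations. -/
theorem random_unitary_caratheodory_bound
    {H : Type*} [NormedAddCommGroup H] [InnerProductSpace ℂ H] [FiniteDimensional ℂ H]
    (𝔘 : (H →L[ℂ] H) →L[ℂ] (H →L[ℂ] H))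
    (h𝔘 : 𝔘 ∈ convexHull ℝ {T | ∃ V ∈ unitary (H →L[ℂ] H), T = conjCLM V}) :
    ∃ m : ℕ, m ≤ ((Module.finrank ℂ H) ^ 2 - 1) ^ 2 + 1 ∧
      ∃ (V : Fin m → (H →L[ℂ] H)) (p : Fin m → ℝ),
        (∀ k, V k ∈ unitary (H →L[ℂ] H)) ∧ (∀ k, 0 ≤ p k) ∧ (∑ k, p k = 1) ∧
        ∀ A : H →L[ℂ] H, 𝔘 A = ∑ k, p k • (V k * A * star (V k)) := by
  classical
  by_cases hN0 : Module.finrank ℂ H = 0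
  · -- trivial case: `H = 0`
    have hsH : Subsingleton H := Module.finrank_zero_iff.mp hN0
    have hsB : Subsingleton (H →L[ℂ] H) := ⟨fun f g => by
      ext x
      exact Subsingleton.elim _ _⟩
    refine ⟨1, by simp [hN0], fun _ => 1, fun _ => 1, fun k => ?_, fun k => zero_le_one,
      by simp, fun A => Subsingleton.elim _ _⟩
    exact one_mem (unitary (H →L[ℂ] H))
  · have hN : 1 ≤ Module.finrank ℂ H := Nat.one_le_iff_ne_zero.mpr hN0
    obtain ⟨ι, hfin, z, w, hzS, hAI, hwpos, hwsum, hrep⟩ :=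
      eq_pos_convex_span_of_mem_convexHull h𝔘
    letI := hfin
    have hne : Nonempty ι := by
      by_contra hcon
      rw [not_nonempty_iff] at hcon
      rw [Finset.sum_eq_zero (fun i _ => (IsEmpty.false i).elim)] at hwsum
      exact one_ne_zero hwsum.symm
    -- the cardinality bound
    have hcard : Fintype.card ι = (Fintype.card ι - 1) + 1 :=
      (Nat.succ_pred_eq_of_pos Fintype.card_pos).symm
    have hvs := hAI.finrank_vectorSpan hcard
    have hle : vectorSpan ℝ (Set.range z) ≤ goodSub := by
      rw [vectorSpan_def]
      apply Submodule.span_le.mpr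
      intro x hx
      rw [Set.mem_vsub] at hx
      obtain ⟨a, ha, b, hb, rfl⟩ := hx
      obtain ⟨Va, hVa, rfl⟩ := hzS ha
      obtain ⟨Vb, hVb, rfl⟩ := hzS hb
      exact conj_diff_mem_goodSub hVa hVb
    have hdim : Fintype.card ι - 1 ≤ ((Module.finrank ℂ H) ^ 2 - 1) ^ 2 := by
      calc Fintype.card ι - 1
          = Module.finrank ℝ (vectorSpan ℝ (Set.range z)) := hvs.symm
        _ ≤ Module.finrank ℝ ↥(goodSub (H := H)) := Submodule.finrank_mono hle
        _ ≤ ((Module.finrank ℂ H) ^ 2 - 1) ^ 2 := finrank_goodSub_le hN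
    -- choose the unitaries
    choose V hVmem hVeq using fun i : ι => hzS (Set.mem_range_self i)
    set m := Fintype.card ι with hm
    set e : Fin m ≃ ι := (Fintype.equivFin ι).symm with he
    refine ⟨m, by omega, fun k => V (e k), fun k => w (e k), fun k => hVmem (e k),
      fun k => (hwpos (e k)).le, ?_, ?_⟩
    · rw [Equiv.sum_comp e w, hwsum]
    · intro A
      have h1 : 𝔘 A = ∑ i, w i • (z i A) := by
        rw [← hrep, ContinuousLinearMap.sum_apply]
        simp only [ContinuousLinearMap.smul_apply]
      have h2 : ∀ i, z i A = V i * A * star (V i) := by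
        intro i
        rw [hVeq i, conjCLM, ContinuousLinearMap.mulLeftRight_apply]
      rw [h1]
      rw [← Equiv.sum_comp e (fun i => w i • (z i A))]
      exact Finset.sum_congr rfl fun k _ => by rw [h2 (e k)]
end

section
/- Let G be a locally compact, second countable, Hausdorff topological group, let (μ_t)_{t≥0} be a continuous convolution semigroup of probability measures on G, and let φ : G → ℂ be a bounded Borel function which vanishes on some Borel neighborhood of the identity of G. Then for every sequence (τ_m) of strictly positive reals converging to zero, there exists a subsequence (t_k) = (τ_{m_k}) such that the limit lim_{k→∞} (1/t_k) ∫_G φ(g) dμ_{t_k}(g) exists in ℂ. -/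
open MeasureTheory Filter Topology Pointwise

/-- Auxiliary recursion: `convQ ν V n x` is the probability that the random walk started at `x`
with steps distributed by `ν` stays in `V` for its first `n` positions (including the start). -/
noncomputable def convQ {G : Type*} [Group G] [MeasurableSpace G]
    (ν : Measure G) (V : Set G) : ℕ → G → ENNReal
  | 0 => V.indicator 1
  | n+1 => V.indicator fun x => ∫⁻ y, convQ ν V n (x*y) ∂ν

section aux

variable {G : Type*} [Group G] [MeasurableSpace G] [MeasurableMul₂ G]
  {ν : MeasureTheory.Measure G} {V : Set G}

lemma convQ_zero_of_not_mem (n : ℕ) {x : G} (hx : x ∉ V) : convQ ν V n x = 0 := by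
  cases n <;> simp [convQ, Set.indicator_of_notMem hx]

lemma convQ_measurable [SFinite ν] (hV : MeasurableSet V) : ∀ n, Measurable (convQ ν V n)
  | 0 => measurable_const.indicator hV
  | n+1 => by
      refine Measurable.indicator ?_ hV
      exact Measurable.lintegral_prod_right' ((convQ_measurable hV n).comp measurable_mul)

lemma convQ_le_one [IsProbabilityMeasure ν] : ∀ n, ∀ x : G, convQ ν V n x ≤ 1
  | 0, x => by
      by_cases hx : x ∈ V <;>
        simp [convQ, Set.indicator_of_notMem, Set.indicator_of_mem, hx]
  | n+1, x => by
      by_cases hx : x ∈ V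
      · rw [show convQ ν V (n+1) x = ∫⁻ y, convQ ν V n (x*y) ∂ν from by
          simp [convQ, Set.indicator_of_mem hx]]
        calc ∫⁻ y, convQ ν V n (x*y) ∂ν ≤ ∫⁻ _, 1 ∂ν :=
              lintegral_mono fun y => convQ_le_one n (x*y)
          _ = 1 := by simp
      · simp [convQ_zero_of_not_mem _ hx]

lemma convQ_le_pow [IsProbabilityMeasure ν] (hV : MeasurableSet V)
    {N : Set G} (hVN : ∀ x ∈ V, (fun y => x*y) ⁻¹' V ⊆ N) :
    ∀ n, ∀ x ∈ V, convQ ν V n x ≤ (ν N)^n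
  | 0, x, _ => by simpa using convQ_le_one (ν := ν) (V := V) 0 x
  | n+1, x, hx => by
      rw [show convQ ν V (n+1) x = ∫⁻ y, convQ ν V n (x*y) ∂ν from by
        simp [convQ, Set.indicator_of_mem hx]]
      have hpre : MeasurableSet ((fun y => x*y) ⁻¹' V) := hV.preimage (measurable_const_mul x)
      calc ∫⁻ y, convQ ν V n (x*y) ∂ν
          ≤ ∫⁻ y, ((fun y => x*y) ⁻¹' V).indicator (fun _ => (ν N)^n) y ∂ν := by
            refine lintegral_mono fun y => ?_
            by_cases hxy : x*y ∈ V
            · rw [Set.indicator_of_mem (by exact hxy)]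
              exact convQ_le_pow hV hVN n (x*y) hxy
            · simp [convQ_zero_of_not_mem _ hxy]
        _ = (ν N)^n * ν ((fun y => x*y) ⁻¹' V) := lintegral_indicator_const hpre _
        _ ≤ (ν N)^n * ν N := mul_le_mul_right (measure_mono (hVN x hx)) _
        _ = (ν N)^(n+1) := by ring

end aux

/-- A bounded continuous bump: `1` at the identity, vanishing outside a given open
neighborhood, with values in `[0,1]`. -/
lemma exists_bump_bcf {G : Type*} [TopologicalSpace G] [SecondCountableTopology G]
    [T2Space G] [RegularSpace G] {B : Set G} (hB : IsOpen B) {x0 : G} (h1 : x0 ∈ B) :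
    ∃ F : BoundedContinuousFunction G ℝ, F x0 = 1 ∧
      ∀ x, F x ≤ B.indicator (fun _ => (1:ℝ)) x := by
  letI : MetricSpace G := TopologicalSpace.metrizableSpaceMetric G
  obtain ⟨f, hf0, hf1, hf01⟩ := exists_continuous_zero_one_of_isClosed
    hB.isClosed_compl isClosed_singleton
    (Set.disjoint_singleton_right.mpr (fun h => h h1))
  refine ⟨BoundedContinuousFunction.mkOfBound f 1
    (fun x y => by
      have hx := hf01 x; have hy := hf01 y
      rw [Real.dist_eq, abs_sub_le_iff]
      constructor <;> nlinarith [hx.1, hx.2, hy.1, hy.2]), hf1 rfl, ?_⟩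
  intro x
  by_cases hx : x ∈ B
  · rw [Set.indicator_of_mem hx]; exact (hf01 x).2
  · rw [Set.indicator_of_notMem hx]
    exact le_of_eq (hf0 hx)

set_option maxHeartbeats 1000000 in
/-- For a continuous convolution semigroup of probability measures
`(μ_t)_{t≥0}` on a l.c.s.c. group `G` and a bounded Borel function `φ : G → ℂ` vanishing on a
Borel neighborhood of the identity, every sequence of strictly positive reals converging to `0`
has a subsequence `(t_k)` along which `(1/t_k) ∫ φ dμ_{t_k}` converges in `ℂ`. -/
theorem subsequence_limit_of_vanishing_near_identity
    {G : Type*} [Group G] [TopologicalSpace G] [IsTopologicalGroup G]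
    [LocallyCompactSpace G] [SecondCountableTopology G] [T2Space G]
    [MeasurableSpace G] [BorelSpace G]
    (μ : ℝ → Measure G)
    (hprob : ∀ t, 0 ≤ t → IsProbabilityMeasure (μ t))
    (h0 : μ 0 = Measure.dirac 1)
    (hconv : ∀ s t : ℝ, 0 ≤ s → 0 ≤ t →
      μ (s + t) = (((μ s).prod (μ t)).map fun p => p.1 * p.2))
    (hweak : ∀ f : BoundedContinuousFunction G ℝ,
      Tendsto (fun t => ∫ g, f g ∂(μ t)) (𝓝[>] (0 : ℝ)) (𝓝 (f 1)))
    (φ : G → ℂ) (hφ_meas : Measurable φ) (hφ_bdd : ∃ C : ℝ, ∀ g, ‖φ g‖ ≤ C)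
    (hφ_vanish : ∃ N : Set G, MeasurableSet N ∧ N ∈ 𝓝 (1 : G) ∧ ∀ g ∈ N, φ g = 0)
    (τ : ℕ → ℝ) (hτ_pos : ∀ m, 0 < τ m) (hτ_lim : Tendsto τ atTop (𝓝 0)) :
    ∃ mk : ℕ → ℕ, StrictMono mk ∧ ∃ c : ℂ,
      Tendsto (fun k => (τ (mk k))⁻¹ • ∫ g, φ g ∂(μ (τ (mk k)))) atTop (𝓝 c) := by
  obtain ⟨C, hC⟩ := hφ_bdd
  set C' : ℝ := max C 0 with hC'def
  have hC'0 : 0 ≤ C' := le_max_right _ _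
  have hC' : ∀ g, ‖φ g‖ ≤ C' := fun g => (hC g).trans (le_max_left _ _)
  obtain ⟨N, hNm, hNnhds, hNφ⟩ := hφ_vanish
  obtain ⟨O, hON, hOopen, hO1⟩ := mem_nhds_iff.mp hNnhds
  obtain ⟨B1, hB1open, hB11, hB1O⟩ := exists_open_nhds_one_mul_subset (hOopen.mem_nhds hO1)
  obtain ⟨B2, hB2open, hB21, hB2B1⟩ := exists_open_nhds_one_mul_subset (hB1open.mem_nhds hB11)
  set B : Set G := B2 ∩ B2⁻¹ with hBdef
  have hBopen : IsOpen B := hB2open.inter (hB2open.inv)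
  have hBmeas : MeasurableSet B := hBopen.measurableSet
  have hB1mem : (1:G) ∈ B := ⟨hB21, by simpa using hB21⟩
  have hBsymm : ∀ x ∈ B, x⁻¹ ∈ B := fun x hx => ⟨hx.2, by simpa using hx.1⟩
  have hBB1 : ∀ a ∈ B, ∀ b ∈ B, a*b ∈ B1 := fun a ha b hb =>
    hB2B1 (Set.mul_mem_mul ha.1 hb.1)
  set V : Set G := B * B with hVdef
  have hVopen : IsOpen V := hBopen.mul_left
  have hVmeas : MeasurableSet V := hVopen.measurableSet
  have h1V : (1:G) ∈ V := by
    simpa using Set.mul_mem_mul hB1mem hB1mem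
  -- if the walk stays in V, each step lies in N
  have hVN : ∀ x ∈ V, (fun y => x*y) ⁻¹' V ⊆ N := by
    rintro x ⟨a, ha, b, hb, rfl⟩ y hy
    obtain ⟨c, hc, d, hd, hcd⟩ := hy
    have hcd' : c * d = (a * b) * y := hcd
    have hyeq : y = (b⁻¹ * a⁻¹) * (c * d) := by rw [hcd']; group
    exact hON (hB1O (hyeq ▸ Set.mul_mem_mul
      (hBB1 _ (hBsymm b hb) _ (hBsymm a ha)) (hBB1 c hc d hd)))
  -- if x left V, one more B-step keeps it outside B
  have hVc : ∀ x, x ∉ V → ∀ w ∈ B, x*w ∉ B := by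
    intro x hx w hw hxw
    exact hx ⟨x*w, hxw, w⁻¹, hBsymm w hw, by group⟩
  -- Urysohn bump function supported in B, equal to 1 at the identity
  obtain ⟨F, hF1, hFle⟩ := exists_bump_bcf hBopen hB1mem
  -- choose t0 > 0 with ∫ F dμ_s ≥ 7/8 for all s ∈ (0, t0]
  have hev : ∀ᶠ s in 𝓝[>] (0:ℝ), 7/8 ≤ ∫ g, F g ∂(μ s) :=
    (hweak F).eventually (eventually_ge_nhds (by rw [hF1]; norm_num))
  obtain ⟨t0, ht0pos, ht0sub⟩ := mem_nhdsGT_iff_exists_Ioc_subset.mp hev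
  rw [Set.mem_Ioi] at ht0pos
  -- measure bounds on B from weak convergence
  have hμB : ∀ s, 0 < s → s ≤ t0 → ENNReal.ofReal (7/8) ≤ μ s B := by
    intro s hs1 hs2
    haveI := hprob s hs1.le
    have h1 : 7/8 ≤ ∫ g, F g ∂(μ s) := ht0sub ⟨hs1, hs2⟩
    have h2 : ∫ g, F g ∂(μ s) ≤ (μ s B).toReal := by
      calc ∫ g, F g ∂(μ s) ≤ ∫ g, B.indicator (fun _ => (1:ℝ)) g ∂(μ s) :=
            integral_mono (F.integrable _) ((integrable_const 1).indicator hBmeas)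
              (fun g => hFle g)
        _ = (μ s B).toReal := by rw [integral_indicator_const _ hBmeas]; simp [Measure.real_def]
    calc ENNReal.ofReal (7/8) ≤ ENNReal.ofReal ((μ s B).toReal) :=
          ENNReal.ofReal_le_ofReal (h1.trans h2)
      _ = μ s B := ENNReal.ofReal_toReal (measure_ne_top _ _)
  have hμBge : ∀ s, 0 ≤ s → s ≤ t0 → ENNReal.ofReal (1/2) ≤ μ s B := by
    intro s hs1 hs2
    rcases eq_or_lt_of_le hs1 with h | h
    · rw [← h, h0, Measure.dirac_apply_of_mem hB1mem]
      exact ENNReal.ofReal_le_one.mpr (by norm_num)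
    · exact le_trans (ENNReal.ofReal_le_ofReal (by norm_num)) (hμB s h hs2)
  have hμBc : ∀ s, 0 < s → s ≤ t0 → μ s Bᶜ ≤ ENNReal.ofReal (1/8) := by
    intro s hs1 hs2
    haveI := hprob s hs1.le
    rw [prob_compl_eq_one_sub hBmeas, tsub_le_iff_right]
    calc (1:ENNReal) = ENNReal.ofReal (1/8) + ENNReal.ofReal (7/8) := by
          rw [← ENNReal.ofReal_add (by norm_num) (by norm_num)]; norm_num
      _ ≤ ENNReal.ofReal (1/8) + μ s B := add_le_add le_rfl (hμB s hs1 hs2)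
  -- the core estimate
  have hcore : ∀ t, 0 < t → t ≤ t0/2 → μ t Nᶜ ≤ ENNReal.ofReal (4/t0*t) := by
    intro t ht htt0
    haveI := hprob t ht.le
    set ν := μ t with hνdef
    set Rf : ℕ → G → ENNReal := fun n x => μ ((n:ℝ)*t) ((fun z => x*z) ⁻¹' Bᶜ) with hRfdef
    have hRrec : ∀ (n:ℕ) (x:G), Rf (n+1) x = ∫⁻ y, Rf n (x*y) ∂ν := by
      intro n x
      haveI := hprob ((n:ℝ)*t) (by positivity)
      have hS : MeasurableSet ((fun z => x*z) ⁻¹' Bᶜ) :=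
        hBmeas.compl.preimage (measurable_const_mul x)
      have hcast : ((n+1:ℕ):ℝ)*t = t + (n:ℝ)*t := by push_cast; ring
      calc Rf (n+1) x = μ (t + (n:ℝ)*t) ((fun z => x*z) ⁻¹' Bᶜ) := by
            simp only [hRfdef]; rw [hcast]
        _ = ((ν.prod (μ ((n:ℝ)*t))).map fun p => p.1 * p.2) ((fun z => x*z) ⁻¹' Bᶜ) := by
            rw [hconv t ((n:ℝ)*t) ht.le (by positivity)]
        _ = (ν.prod (μ ((n:ℝ)*t))) ((fun p : G × G => p.1 * p.2) ⁻¹' ((fun z => x*z) ⁻¹' Bᶜ)) :=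
            Measure.map_apply (measurable_fst.mul measurable_snd) hS
        _ = ∫⁻ y, μ ((n:ℝ)*t) (Prod.mk y ⁻¹' ((fun p : G × G => p.1 * p.2) ⁻¹' ((fun z => x*z) ⁻¹' Bᶜ))) ∂ν :=
            Measure.prod_apply (hS.preimage (measurable_fst.mul measurable_snd))
        _ = ∫⁻ y, Rf n (x*y) ∂ν := by
            refine lintegral_congr fun y => ?_
            simp only [hRfdef]
            congr 1
            ext w
            simp [mul_assoc]
    -- the key estimate, by induction
    have hkey : ∀ n : ℕ, (n:ℝ)*t ≤ t0 → ∀ x ∈ V,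
        (1 - convQ ν V n x) * ENNReal.ofReal (1/2) ≤ Rf n x := by
      intro n
      induction n with
      | zero =>
        intro _ x hx
        simp [convQ, Set.indicator_of_mem hx]
      | succ n ih =>
        intro hn x hx
        have hnt : (n:ℝ)*t ≤ t0 :=
          le_trans (by push_cast; nlinarith [ht.le, Nat.cast_nonneg (α := ℝ) n]) hn
        have hpt : ∀ y, (1 - convQ ν V n (x*y)) * ENNReal.ofReal (1/2) ≤ Rf n (x*y) := by
          intro y
          by_cases hxy : x*y ∈ V
          · exact ih hnt _ hxy
          · rw [convQ_zero_of_not_mem n hxy, tsub_zero, one_mul]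
            have hBsub : B ⊆ (fun z => (x*y)*z) ⁻¹' Bᶜ := fun w hw => hVc (x*y) hxy w hw
            calc ENNReal.ofReal (1/2) ≤ μ ((n:ℝ)*t) B :=
                  hμBge _ (by positivity) hnt
              _ ≤ Rf n (x*y) := measure_mono hBsub
        have hQmeas : Measurable (fun y => convQ ν V n (x*y)) :=
          (convQ_measurable hVmeas n).comp (measurable_const_mul x)
        have hQint : ∫⁻ y, convQ ν V n (x*y) ∂ν ≠ ⊤ := by
          refine ne_top_of_le_ne_top (by simp : (1:ENNReal) ≠ ⊤) ?_
          calc ∫⁻ y, convQ ν V n (x*y) ∂ν ≤ ∫⁻ _, 1 ∂ν :=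
                lintegral_mono fun y => convQ_le_one n (x*y)
            _ = 1 := by simp
        calc (1 - convQ ν V (n+1) x) * ENNReal.ofReal (1/2)
            = (1 - ∫⁻ y, convQ ν V n (x*y) ∂ν) * ENNReal.ofReal (1/2) := by
              rw [show convQ ν V (n+1) x = ∫⁻ y, convQ ν V n (x*y) ∂ν from by
                simp [convQ, Set.indicator_of_mem hx]]
          _ = (∫⁻ y, (1 - convQ ν V n (x*y)) ∂ν) * ENNReal.ofReal (1/2) := by
              rw [lintegral_sub hQmeas hQint (ae_of_all _ fun y => convQ_le_one n (x*y))]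
              simp
          _ = ∫⁻ y, (1 - convQ ν V n (x*y)) * ENNReal.ofReal (1/2) ∂ν := by
              rw [lintegral_mul_const (f := fun y => 1 - convQ ν V n (x*y)) _ (measurable_const.sub hQmeas)]
          _ ≤ ∫⁻ y, Rf n (x*y) ∂ν := lintegral_mono hpt
          _ = Rf (n+1) x := (hRrec n x).symm
    -- conclude by contradiction
    by_contra hq
    push_neg at hq
    set n : ℕ := ⌊t0/t⌋₊ with hndef
    have ht0t2 : (2:ℝ) ≤ t0/t := by rw [le_div_iff₀ ht]; linarith
    have hnt : (n:ℝ)*t ≤ t0 := by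
      have h := Nat.floor_le (by positivity : (0:ℝ) ≤ t0/t)
      calc (n:ℝ)*t ≤ (t0/t)*t := by nlinarith
        _ = t0 := by field_simp
    have hnpos : 0 < (n:ℝ)*t := by
      have h1 : 1 ≤ n := Nat.le_floor (by rw [Nat.cast_one]; linarith)
      have h1' : (1:ℝ) ≤ (n:ℝ) := by exact_mod_cast h1
      nlinarith
    have hnge : t0/t - 1 ≤ (n:ℝ) := (Nat.sub_one_lt_floor (t0/t)).le
    set qr : ℝ := (μ t Nᶜ).toReal with hqrdef
    have hqr0 : 0 ≤ qr := ENNReal.toReal_nonneg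
    have hq' : 4/t0*t < qr := by
      rw [hqrdef, ← ENNReal.ofReal_lt_iff_lt_toReal (by positivity) (measure_ne_top _ _)]
      exact hq
    have hnqr : 2 ≤ (n:ℝ) * qr := by
      have h1 : t0 - t ≤ (n:ℝ)*t := by
        calc t0 - t = (t0/t - 1)*t := by field_simp
          _ ≤ (n:ℝ)*t := by nlinarith
      have h2 : t0/2 ≤ (n:ℝ)*t := by linarith
      have h3 : 4*t ≤ qr*t0 := by
        calc 4*t = (4/t0*t)*t0 := by field_simp
          _ ≤ qr*t0 := by nlinarith
      nlinarith
    have hνN : ν N ≤ ENNReal.ofReal (Real.exp (-qr)) := by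
      have hcompl : ν N + ν Nᶜ = 1 := by
        rw [measure_add_measure_compl hNm]; exact measure_univ
      have htr : (ν N).toReal + qr = 1 := by
        rw [hqrdef, hνdef, ← ENNReal.toReal_add (measure_ne_top _ _) (measure_ne_top _ _)]
        rw [← hνdef, hcompl]
        simp
      have h1 : (ν N).toReal ≤ Real.exp (-qr) := by
        have := Real.add_one_le_exp (-qr)
        linarith
      calc ν N = ENNReal.ofReal ((ν N).toReal) := (ENNReal.ofReal_toReal (measure_ne_top _ _)).symm
        _ ≤ ENNReal.ofReal (Real.exp (-qr)) := ENNReal.ofReal_le_ofReal h1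
    have hpow : (ν N)^n ≤ ENNReal.ofReal (1/2) := by
      calc (ν N)^n ≤ (ENNReal.ofReal (Real.exp (-qr)))^n := pow_le_pow_left' hνN n
        _ = ENNReal.ofReal ((Real.exp (-qr))^n) := (ENNReal.ofReal_pow (Real.exp_nonneg _) n).symm
        _ = ENNReal.ofReal (Real.exp ((n:ℝ) * (-qr))) := by rw [Real.exp_nat_mul]
        _ ≤ ENNReal.ofReal (1/2) := by
            refine ENNReal.ofReal_le_ofReal ?_
            have h1 : (n:ℝ) * (-qr) ≤ -2 := by nlinarith
            calc Real.exp ((n:ℝ)*(-qr)) ≤ Real.exp (-2) := Real.exp_le_exp.mpr h1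
              _ ≤ 1/2 := by
                  rw [Real.exp_neg, inv_le_iff_one_le_mul₀ (Real.exp_pos 2)]
                  nlinarith [Real.add_one_le_exp (2:ℝ)]
    have hQ1 : convQ ν V n 1 ≤ ENNReal.ofReal (1/2) :=
      le_trans (convQ_le_pow hVmeas hVN n 1 h1V) hpow
    have hhalf : ENNReal.ofReal (1/2) ≤ 1 - convQ ν V n 1 := by
      calc ENNReal.ofReal (1/2) = 1 - ENNReal.ofReal (1/2) := by
            rw [← ENNReal.ofReal_one, ← ENNReal.ofReal_sub _ (by norm_num)]; norm_num
        _ ≤ 1 - convQ ν V n 1 := tsub_le_tsub_left hQ1 _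
    have hfinal : ENNReal.ofReal (1/4) ≤ μ ((n:ℝ)*t) Bᶜ := by
      have h1 : ENNReal.ofReal (1/2) * ENNReal.ofReal (1/2) ≤ Rf n 1 :=
        le_trans (mul_le_mul_left hhalf _) (hkey n hnt 1 h1V)
      have h2 : Rf n 1 = μ ((n:ℝ)*t) Bᶜ := by
        simp only [hRfdef]
        congr 1
        ext w
        simp
      rw [← h2, ← ENNReal.ofReal_mul (by norm_num)] at *
      calc ENNReal.ofReal (1/4) = ENNReal.ofReal (1/2 * (1/2)) := by norm_num
        _ ≤ Rf n 1 := h1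
    have hcontra := le_trans hfinal (hμBc ((n:ℝ)*t) hnpos hnt)
    rw [ENNReal.ofReal_le_ofReal_iff (by norm_num)] at hcontra
    norm_num at hcontra
  -- integrability and norm bounds
  have hint : ∀ s, 0 ≤ s → Integrable φ (μ s) := by
    intro s hs
    haveI := hprob s hs
    exact (integrable_const C').mono' hφ_meas.aestronglyMeasurable (ae_of_all _ hC')
  have hnorm1 : ∀ s, 0 ≤ s → ‖∫ g, φ g ∂(μ s)‖ ≤ C' * (μ s Nᶜ).toReal := by
    intro s hs
    haveI := hprob s hs
    calc ‖∫ g, φ g ∂(μ s)‖ ≤ ∫ g, ‖φ g‖ ∂(μ s) := norm_integral_le_integral_norm _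
      _ ≤ ∫ g, Nᶜ.indicator (fun _ => C') g ∂(μ s) := by
          refine integral_mono (hint s hs).norm ((integrable_const C').indicator hNm.compl) ?_
          intro g
          show ‖φ g‖ ≤ Nᶜ.indicator (fun _ => C') g
          by_cases hg : g ∈ N
          · rw [hNφ g hg, Set.indicator_of_notMem (by simpa using hg)]
            simp
          · rw [Set.indicator_of_mem (by exact hg)]
            exact hC' g
      _ = C' * (μ s Nᶜ).toReal := by
          rw [integral_indicator_const _ hNm.compl, smul_eq_mul, Measure.real_def]; ring
  -- uniform bound on the sequence
  set a : ℕ → ℂ := fun m => (τ m)⁻¹ • ∫ g, φ g ∂(μ (τ m)) with hadef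
  have habd : ∀ m, ‖a m‖ ≤ 4*C'/t0 := by
    intro m
    have hτm := hτ_pos m
    have hnorm : ‖a m‖ = (τ m)⁻¹ * ‖∫ g, φ g ∂(μ (τ m))‖ := by
      show ‖(τ m)⁻¹ • ∫ g, φ g ∂(μ (τ m))‖ = _
      rw [norm_smul, norm_inv, Real.norm_eq_abs, abs_of_pos hτm]
    by_cases hsmall : τ m ≤ t0/2
    · have h1 : (μ (τ m) Nᶜ).toReal ≤ 4/t0*(τ m) :=
        ENNReal.toReal_le_of_le_ofReal (by positivity) (hcore (τ m) hτm hsmall)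
      have h2 : ‖∫ g, φ g ∂(μ (τ m))‖ ≤ C' * (4/t0*(τ m)) :=
        le_trans (hnorm1 (τ m) hτm.le) (by nlinarith)
      rw [hnorm, inv_mul_le_iff₀ hτm]
      calc ‖∫ g, φ g ∂(μ (τ m))‖ ≤ C' * (4/t0*(τ m)) := h2
        _ = τ m * (4*C'/t0) := by ring
    · push_neg at hsmall
      haveI := hprob (τ m) hτm.le
      have h1 : (μ (τ m) Nᶜ).toReal ≤ 1 := by
        calc (μ (τ m) Nᶜ).toReal ≤ (1:ENNReal).toReal :=
              ENNReal.toReal_mono (by simp) prob_le_one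
          _ = 1 := by simp
      have h2 : ‖∫ g, φ g ∂(μ (τ m))‖ ≤ C' :=
        le_trans (hnorm1 (τ m) hτm.le) (by nlinarith)
      rw [hnorm]
      have h3 : (τ m)⁻¹ ≤ 2/t0 := by
        rw [inv_le_iff_one_le_mul₀ hτm, div_mul_eq_mul_div, le_div_iff₀ ht0pos]
        linarith
      calc (τ m)⁻¹ * ‖∫ g, φ g ∂(μ (τ m))‖ ≤ (2/t0) * C' :=
            mul_le_mul h3 h2 (norm_nonneg _) (by positivity)
        _ ≤ 4*C'/t0 := by
            rw [div_mul_eq_mul_div, div_le_div_iff₀ ht0pos ht0pos]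
            nlinarith
  -- Bolzano–Weierstrass
  obtain ⟨c, _, mk, hmk, hlim⟩ := tendsto_subseq_of_bounded
    (Metric.isBounded_closedBall (x := (0:ℂ)) (r := 4*C'/t0))
    (x := a) (fun m => by rw [Metric.mem_closedBall, dist_zero_right]; exact habd m)
  exact ⟨mk, hmk, c, hlim⟩
end
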